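/- Let M be an Orlicz function and m ≥ 1, n ≥ 1 integers. Then C_∞(M, Δ_m^{n−1}) ⊆ C_∞(M, Δ_m^n); that is, if a real sequence x satisfies sup_{i≥1} (1/i) Σ_{k=1}^{i} M(|Δ_m^{n−1} x_k|/ρ) < ∞ for some ρ > 0, then sup_{i≥1} (1/i) Σ_{k=1}^{i} M(|Δ_m^n x_k|/ρ') < ∞ for some ρ' > 0 (one may take ρ' = 2ρ). -/

import Mathlib

/-!
Statement 14 (Paper: Theorem 3.5(b) for `Z = C_∞`).
`C_∞(M, Δ_m^{n-1}) ⊆ C_∞(M, Δ_m^n)`, with `ρ' = 2ρ` as a valid witness.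
Sequences are indexed so that `x k` represents the paper's `x_{k+1}`.
-/

open scoped ENNReal

/-- An Orlicz function. -/
def IsOrliczFunction (M : ℝ → ℝ) : Prop :=
  ContinuousOn M (Set.Ici 0) ∧ MonotoneOn M (Set.Ici 0) ∧ ConvexOn ℝ (Set.Ici 0) M ∧
    M 0 = 0 ∧ (∀ x : ℝ, 0 < x → 0 < M x) ∧ Filter.Tendsto M Filter.atTop Filter.atTop

/-- The generalized difference operator. -/
def delta (m : ℕ) : ℕ → (ℕ → ℝ) → ℕ → ℝ
  | 0, x => x
  | n + 1, x => fun k => delta m n x k - delta m n x (k + m)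

/-- The Cesàro average `(1/i) ∑_{k=1}^{i} M (|x_k| / ρ)`, where `i` here is `i+1`. -/
noncomputable def cesTerm (M : ℝ → ℝ) (x : ℕ → ℝ) (ρ : ℝ) (i : ℕ) : ℝ :=
  (1 / (i + 1 : ℝ)) * ∑ k ∈ Finset.range (i + 1), M (|x k| / ρ)

/-- `sup_{i ≥ 1} (1/i) ∑_{k=1}^{i} M (|x_k| / ρ)`, valued in `ℝ≥0∞`. -/
noncomputable def cesSup (M : ℝ → ℝ) (x : ℕ → ℝ) (ρ : ℝ) : ℝ≥0∞ :=
  ⨆ i : ℕ, ENNReal.ofReal (cesTerm M x ρ i)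

lemma orlicz_nonneg {M : ℝ → ℝ} (hM : IsOrliczFunction M) {t : ℝ} (ht : 0 ≤ t) :
    0 ≤ M t := by
  have := hM.2.1 (Set.self_mem_Ici) ht ht
  simpa [hM.2.2.2.1] using this

lemma orlicz_half {M : ℝ → ℝ} (hM : IsOrliczFunction M) (a b ρ : ℝ) (hρ : 0 < ρ) :
    M (|a - b| / (2 * ρ)) ≤ (M (|a| / ρ) + M (|b| / ρ)) / 2 := by
  have ha : (0:ℝ) ≤ |a| / ρ := div_nonneg (abs_nonneg _) hρ.le
  have hb : (0:ℝ) ≤ |b| / ρ := div_nonneg (abs_nonneg _) hρ.le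
  have h1 : |a - b| / (2 * ρ) ≤ (1/2) * (|a| / ρ) + (1/2) * (|b| / ρ) := by
    rw [div_le_iff₀ (by positivity)]
    have heq : ((1:ℝ)/2 * (|a| / ρ) + 1/2 * (|b| / ρ)) * (2 * ρ) = |a| + |b| := by
      field_simp
    rw [heq]
    exact abs_sub a b
  have hmid : (0:ℝ) ≤ (1/2) * (|a| / ρ) + (1/2) * (|b| / ρ) := by positivity
  have h2 : M (|a - b| / (2 * ρ)) ≤ M ((1/2) * (|a| / ρ) + (1/2) * (|b| / ρ)) :=
    hM.2.1 (show (0:ℝ) ≤ |a - b| / (2 * ρ) by positivity) hmid h1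
  have h3 := hM.2.2.1.2 ha hb (by norm_num : (0:ℝ) ≤ 1/2) (by norm_num : (0:ℝ) ≤ 1/2)
    (by norm_num : (1:ℝ)/2 + 1/2 = 1)
  simp only [smul_eq_mul] at h3
  linarith

theorem CInfty_delta_inclusion (M : ℝ → ℝ) (hM : IsOrliczFunction M)
    (m n : ℕ) (hm : 1 ≤ m) (hn : 1 ≤ n) (x : ℕ → ℝ) (ρ : ℝ) (hρ : 0 < ρ)
    (h : cesSup M (delta m (n - 1) x) ρ < ⊤) :
    cesSup M (delta m n x) (2 * ρ) < ⊤ := by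
  set y : ℕ → ℝ := delta m (n - 1) x with hy
  have hnn : n = (n - 1) + 1 := (Nat.succ_pred_eq_of_pos hn).symm
  have hz : delta m n x = fun k => y k - y (k + m) := by
    rw [hnn]; rfl
  set B : ℝ := (cesSup M y ρ).toReal with hB
  have hBnn : 0 ≤ B := ENNReal.toReal_nonneg
  -- each cesTerm for y is nonneg
  have hterm_nn : ∀ (z : ℕ → ℝ) (σ : ℝ) (i : ℕ), 0 < σ → 0 ≤ cesTerm M z σ i := by
    intro z σ i hσ
    unfold cesTerm
    apply mul_nonneg (by positivity)
    exact Finset.sum_nonneg fun k _ => orlicz_nonneg hM (div_nonneg (abs_nonneg _) hσ.le)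
  have hBle : ∀ i, cesTerm M y ρ i ≤ B := by
    intro i
    have h1 : ENNReal.ofReal (cesTerm M y ρ i) ≤ cesSup M y ρ := le_iSup (fun i => ENNReal.ofReal (cesTerm M y ρ i)) i
    have := ENNReal.toReal_mono h.ne h1
    rwa [ENNReal.toReal_ofReal (hterm_nn y ρ i hρ)] at this
  -- main estimate: cesTerm for delta^n at 2ρ is ≤ (1/2)B + ((m+1)/2)B
  have key : ∀ i, cesTerm M (delta m n x) (2 * ρ) i ≤ (1/2) * B + ((m + 1 : ℝ)/2) * B := by
    intro i
    have hi1 : (0:ℝ) < (i : ℝ) + 1 := by positivity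
    have step1 : cesTerm M (delta m n x) (2 * ρ) i
        ≤ (1 / (i + 1 : ℝ)) * ∑ k ∈ Finset.range (i + 1),
            ((M (|y k| / ρ) + M (|y (k + m)| / ρ)) / 2) := by
      unfold cesTerm
      apply mul_le_mul_of_nonneg_left _ (by positivity)
      apply Finset.sum_le_sum
      intro k _
      rw [hz]
      exact orlicz_half hM _ _ _ hρ
    have split : (1 / (i + 1 : ℝ)) * ∑ k ∈ Finset.range (i + 1),
            ((M (|y k| / ρ) + M (|y (k + m)| / ρ)) / 2)
        = (1/2) * cesTerm M y ρ i
          + (1/2) * ((1 / (i + 1 : ℝ)) * ∑ k ∈ Finset.range (i + 1), M (|y (k + m)| / ρ)) := by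
      unfold cesTerm
      rw [← Finset.sum_div, Finset.sum_add_distrib]
      ring
    -- bound the shifted sum
    have shift : ∑ k ∈ Finset.range (i + 1), M (|y (k + m)| / ρ)
        ≤ ∑ k ∈ Finset.range (i + m + 1), M (|y k| / ρ) := by
      have : ∑ k ∈ Finset.range (i + 1), M (|y (k + m)| / ρ)
          = ∑ k ∈ (Finset.range (i + 1)).image (· + m), M (|y k| / ρ) := by
        rw [Finset.sum_image]
        intro a _ b _ hab
        simp only at hab; omega
      rw [this]
      apply Finset.sum_le_sum_of_subset_of_nonneg
      · intro k hk
        simp only [Finset.mem_image, Finset.mem_range] at hk ⊢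
        omega
      · intro k _ _
        exact orlicz_nonneg hM (div_nonneg (abs_nonneg _) hρ.le)
    have shifted_le : (1 / (i + 1 : ℝ)) * ∑ k ∈ Finset.range (i + 1), M (|y (k + m)| / ρ)
        ≤ (m + 1 : ℝ) * cesTerm M y ρ (i + m) := by
      have hsum_nn : 0 ≤ ∑ k ∈ Finset.range (i + m + 1), M (|y k| / ρ) :=
        Finset.sum_nonneg fun k _ => orlicz_nonneg hM (div_nonneg (abs_nonneg _) hρ.le)
      have h1 : (1 / (i + 1 : ℝ)) * ∑ k ∈ Finset.range (i + 1), M (|y (k + m)| / ρ)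
          ≤ (1 / (i + 1 : ℝ)) * ∑ k ∈ Finset.range (i + m + 1), M (|y k| / ρ) :=
        mul_le_mul_of_nonneg_left shift (by positivity)
      have h2 : (1 / (i + 1 : ℝ)) * ∑ k ∈ Finset.range (i + m + 1), M (|y k| / ρ)
          ≤ ((m + 1 : ℝ) / ((i : ℝ) + (m : ℝ) + 1)) * ∑ k ∈ Finset.range (i + m + 1), M (|y k| / ρ) := by
        apply mul_le_mul_of_nonneg_right _ hsum_nn
        rw [div_le_div_iff₀ hi1 (by positivity)]
        have hm1 : (1:ℝ) ≤ (m:ℝ) := by exact_mod_cast hm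
        nlinarith [Nat.cast_nonneg (α := ℝ) i, Nat.cast_nonneg (α := ℝ) m]
      have h3 : ((m + 1 : ℝ) / ((i : ℝ) + (m : ℝ) + 1)) * ∑ k ∈ Finset.range (i + m + 1), M (|y k| / ρ)
          = (m + 1 : ℝ) * cesTerm M y ρ (i + m) := by
        unfold cesTerm
        push_cast
        ring
      linarith
    have hlast : (m + 1 : ℝ) * cesTerm M y ρ (i + m) ≤ (m + 1 : ℝ) * B :=
      mul_le_mul_of_nonneg_left (hBle (i + m)) (by positivity)
    have hces := hBle i
    calc cesTerm M (delta m n x) (2 * ρ) i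
        ≤ (1/2) * cesTerm M y ρ i
          + (1/2) * ((1 / (i + 1 : ℝ)) * ∑ k ∈ Finset.range (i + 1), M (|y (k + m)| / ρ)) := by
          rw [← split]; exact step1
      _ ≤ (1/2) * B + ((m + 1 : ℝ)/2) * B := by nlinarith
  have : cesSup M (delta m n x) (2 * ρ) ≤ ENNReal.ofReal ((1/2) * B + ((m + 1 : ℝ)/2) * B) := by
    apply iSup_le
    intro i
    exact ENNReal.ofReal_le_ofReal (key i)
  exact lt_of_le_of_lt this ENNReal.ofReal_lt_top
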